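/- Let h₀ be an extremal marginal tracial state on B ⊗ B with range projection R. Then B ⊗ B = ℂI + (N ⊗ I + I ⊗ N) + (R(B⊗B)R)^⊥, where orthogonal complements are taken in the Hilbert–Schmidt inner product. -/

import Mathlib

open Matrix Kronecker
open scoped ComplexOrder

/-- The trace-preserving conditional expectation of `B ⊗ B` onto `B ⊗ I`:
`P(x ⊗ y) = τ(y) (x ⊗ I)`. -/
noncomputable def Pexp (n : ℕ) (m : Matrix (Fin n × Fin n) (Fin n × Fin n) ℂ) :
    Matrix (Fin n × Fin n) (Fin n × Fin n) ℂ :=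
  Matrix.of fun p q => if p.2 = q.2 then (∑ k, m (p.1, k) (q.1, k)) / n else 0

/-- The trace-preserving conditional expectation of `B ⊗ B` onto `I ⊗ B`:
`Q(x ⊗ y) = τ(x) (I ⊗ y)`. -/
noncomputable def Qexp (n : ℕ) (m : Matrix (Fin n × Fin n) (Fin n × Fin n) ℂ) :
    Matrix (Fin n × Fin n) (Fin n × Fin n) ℂ :=
  Matrix.of fun p q => if p.1 = q.1 then (∑ k, m (k, p.2) (k, q.2)) / n else 0

/-- A marginal tracial state, as a density matrix: positive with `P(h) = Q(h) = I`. -/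
def IsMTS (n : ℕ) (h : Matrix (Fin n × Fin n) (Fin n × Fin n) ℂ) : Prop :=
  h.PosSemidef ∧ Pexp n h = 1 ∧ Qexp n h = 1

/-- An extreme point of the convex set of marginal tracial states. -/
def IsExtremalMTS (n : ℕ) (h₀ : Matrix (Fin n × Fin n) (Fin n × Fin n) ℂ) : Prop :=
  IsMTS n h₀ ∧ ∀ (h₁ h₂ : Matrix (Fin n × Fin n) (Fin n × Fin n) ℂ) (t : ℝ),
    0 < t → t < 1 → IsMTS n h₁ → IsMTS n h₂ →
    h₀ = (t : ℂ) • h₁ + ((1 - t : ℝ) : ℂ) • h₂ → h₁ = h₀ ∧ h₂ = h₀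


variable {ι : Type*} [Fintype ι] [DecidableEq ι]

lemma range_mul_eq_self {R h₀ : Matrix ι ι ℂ} (hRidem : R * R = R)
    (hRrange : LinearMap.range (Matrix.toLin' R) = LinearMap.range (Matrix.toLin' h₀)) :
    R * h₀ = h₀ := by
  apply Matrix.toLin'.injective
  apply LinearMap.ext
  intro v
  rw [Matrix.toLin'_mul]
  simp only [LinearMap.comp_apply]
  have hmem : Matrix.toLin' h₀ v ∈ LinearMap.range (Matrix.toLin' h₀) := ⟨v, rfl⟩
  rw [← hRrange] at hmem
  obtain ⟨u, hu⟩ := hmem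
  rw [← hu, ← LinearMap.comp_apply, ← Matrix.toLin'_mul, hRidem]

lemma exists_factor {R h₀ : Matrix ι ι ℂ}
    (hRrange : LinearMap.range (Matrix.toLin' R) = LinearMap.range (Matrix.toLin' h₀)) :
    ∃ C : Matrix ι ι ℂ, h₀ * C = R := by
  have h : ∀ j, ∃ v, h₀ *ᵥ v = R *ᵥ Pi.single j 1 := by
    intro j
    have hmem : R *ᵥ Pi.single j 1 ∈ LinearMap.range (Matrix.toLin' R) :=
      ⟨Pi.single j 1, Matrix.toLin'_apply _ _⟩
    rw [hRrange] at hmem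
    obtain ⟨v, hv⟩ := hmem
    exact ⟨v, by rw [← Matrix.toLin'_apply]; exact hv⟩
  choose g hg using h
  refine ⟨Matrix.of fun i j => g j i, ?_⟩
  ext i j
  have h2 := congrFun (hg j) i
  simp only [mulVec_single, mul_one] at h2
  simpa [Matrix.mul_apply, Matrix.mulVec, dotProduct] using h2
variable {n : ℕ}

lemma Pexp_add (a b : Matrix (Fin n × Fin n) (Fin n × Fin n) ℂ) :
    Pexp n (a + b) = Pexp n a + Pexp n b := by
  ext p q
  simp only [Pexp, of_apply, Matrix.add_apply]
  split <;> simp [Finset.sum_add_distrib, add_div]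

lemma Pexp_smul (c : ℂ) (a : Matrix (Fin n × Fin n) (Fin n × Fin n) ℂ) :
    Pexp n (c • a) = c • Pexp n a := by
  ext p q
  simp only [Pexp, of_apply, Matrix.smul_apply, smul_eq_mul]
  split <;> [skip; simp]
  rw [← Finset.mul_sum, mul_div_assoc]

lemma Qexp_add (a b : Matrix (Fin n × Fin n) (Fin n × Fin n) ℂ) :
    Qexp n (a + b) = Qexp n a + Qexp n b := by
  ext p q
  simp only [Qexp, of_apply, Matrix.add_apply]
  split <;> simp [Finset.sum_add_distrib, add_div]

lemma Qexp_smul (c : ℂ) (a : Matrix (Fin n × Fin n) (Fin n × Fin n) ℂ) :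
    Qexp n (c • a) = c • Qexp n a := by
  ext p q
  simp only [Qexp, of_apply, Matrix.smul_apply, smul_eq_mul]
  split <;> [skip; simp]
  rw [← Finset.mul_sum, mul_div_assoc]

noncomputable def matEquiv {ι : Type*} [Fintype ι] :
    Matrix ι ι ℂ ≃ₗ[ℂ] EuclideanSpace ℂ (ι × ι) where
  toFun m := WithLp.toLp 2 (fun pq : ι × ι => m pq.1 pq.2)
  map_add' a b := rfl
  map_smul' c a := rfl
  invFun v := Matrix.of fun p q => v (p, q)
  left_inv m := rfl
  right_inv v := rfl

lemma matEquiv_inner {ι : Type*} [Fintype ι] (a b : Matrix ι ι ℂ) :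
    (inner ℂ (matEquiv a) (matEquiv b) : ℂ) = (aᴴ * b).trace := by
  rw [PiLp.inner_apply]
  simp only [RCLike.inner_apply, matEquiv, LinearEquiv.coe_mk, LinearMap.coe_mk, AddHom.coe_mk]
  rw [Matrix.trace]
  simp only [Matrix.diag_apply, Matrix.mul_apply, conjTranspose_apply]
  rw [← Finset.univ_product_univ, Finset.sum_product, Finset.sum_comm]
  simp [mul_comm, Complex.star_def]
  rfl
lemma Pexp_eq_zero_of {n : ℕ} (k : Matrix (Fin n × Fin n) (Fin n × Fin n) ℂ)
    (h : ∀ x : Matrix (Fin n) (Fin n) ℂ,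
      ((x ⊗ₖ (1 : Matrix (Fin n) (Fin n) ℂ))ᴴ * k).trace = 0) :
    Pexp n k = 0 := by
  ext p q
  simp only [Pexp, of_apply, Matrix.zero_apply]
  split
  · have hb := h (Matrix.single p.1 q.1 1)
    rw [Matrix.trace] at hb
    simp only [Matrix.diag_apply, Matrix.mul_apply, conjTranspose_apply, kroneckerMap_apply,
      one_apply, Matrix.single, of_apply, StarMul.star_mul, apply_ite (star : ℂ → ℂ), star_one, star_zero,
      Fintype.sum_prod_type] at hb
    simp only [ite_mul, one_mul, zero_mul, mul_ite, mul_one, mul_zero, Finset.sum_ite_eq, Finset.sum_ite_eq', Finset.mem_univ, if_true] at hb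
    simp only [ite_and, Finset.sum_ite_eq, Finset.sum_ite_eq', Finset.mem_univ, if_true] at hb
    simp at hb
    rw [hb, zero_div]
  · rfl


lemma Qexp_eq_zero_of {n : ℕ} (k : Matrix (Fin n × Fin n) (Fin n × Fin n) ℂ)
    (h : ∀ y : Matrix (Fin n) (Fin n) ℂ,
      (((1 : Matrix (Fin n) (Fin n) ℂ) ⊗ₖ y)ᴴ * k).trace = 0) :
    Qexp n k = 0 := by
  ext p q
  simp only [Qexp, of_apply, Matrix.zero_apply]
  split
  · have hb := h (Matrix.single p.2 q.2 1)
    rw [Matrix.trace] at hb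
    simp only [Matrix.diag_apply, Matrix.mul_apply, conjTranspose_apply, kroneckerMap_apply,
      one_apply, Matrix.single, of_apply, StarMul.star_mul, apply_ite (star : ℂ → ℂ), star_one,
      star_zero, Fintype.sum_prod_type] at hb
    simp only [ite_and, Finset.sum_ite_eq, Finset.sum_ite_eq', Finset.mem_univ, if_true] at hb
    simp at hb
    rw [hb, zero_div]
  · rfl


lemma exists_eps {ι : Type*} [Fintype ι] [DecidableEq ι] (M : Matrix ι ι ℂ)
    (hM : M.IsHermitian) :
    ∃ ε : ℝ, 0 < ε ∧ ((1 : Matrix ι ι ℂ) + (ε:ℂ) • M).PosSemidef ∧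
      ((1 : Matrix ι ι ℂ) - (ε:ℂ) • M).PosSemidef := by
  classical
  have hVV : (hM.eigenvectorUnitary : Matrix ι ι ℂ) * star (hM.eigenvectorUnitary : Matrix ι ι ℂ) = 1 :=
    (Matrix.mem_unitaryGroup_iff).mp hM.eigenvectorUnitary.2
  set ev := hM.eigenvalues with hev
  have key : ∀ s : ℝ, (∀ i, 0 ≤ 1 + s * ev i) → ((1 : Matrix ι ι ℂ) + (s:ℂ) • M).PosSemidef := by
    intro s hs
    have split : diagonal (fun i => ((1 + s * ev i : ℝ) : ℂ))
        = (1 : Matrix ι ι ℂ) + (s:ℂ) • diagonal (RCLike.ofReal ∘ ev) := by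
      ext i j
      by_cases h : i = j <;> simp [h, Matrix.one_apply, diagonal_apply] <;> push_cast <;> ring
    have h1 : (1 : Matrix ι ι ℂ) + (s:ℂ) • M
        = (hM.eigenvectorUnitary : Matrix ι ι ℂ) * diagonal (fun i => ((1 + s * ev i : ℝ) : ℂ))
          * star (hM.eigenvectorUnitary : Matrix ι ι ℂ) := by
      rw [split, mul_add, add_mul, mul_one, hVV, mul_smul_comm, smul_mul_assoc, hev,
        ← Unitary.conjStarAlgAut_apply (S := ℂ), ← hM.spectral_theorem]
    have hD : (diagonal (fun i => ((1 + s * ev i : ℝ) : ℂ))).PosSemidef := by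
      refine posSemidef_diagonal_iff.mpr fun i => ?_
      exact_mod_cast hs i
    have hVD := hD.mul_mul_conjTranspose_same (hM.eigenvectorUnitary : Matrix ι ι ℂ)
    rw [← star_eq_conjTranspose] at hVD
    rw [h1]; exact hVD
  have hcnn : (0:ℝ) ≤ ∑ i, |ev i| := Finset.sum_nonneg fun i _ => abs_nonneg _
  set c : ℝ := ∑ i, |ev i| with hc
  have hb : ∀ i, |ev i| ≤ c := fun i =>
    Finset.single_le_sum (fun j _ => abs_nonneg (ev j)) (Finset.mem_univ i)
  have h2 : (1+c)⁻¹ * c ≤ 1 := by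
    rw [inv_mul_le_iff₀ (by positivity)]; linarith
  refine ⟨(1+c)⁻¹, by positivity, ?_, ?_⟩
  · apply key
    intro i
    have h1 := (abs_le.mp (hb i)).1
    have h3 : (1+c)⁻¹ * (-c) ≤ (1+c)⁻¹ * ev i :=
      mul_le_mul_of_nonneg_left h1 (by positivity)
    nlinarith
  · rw [sub_eq_add_neg, ← neg_smul, ← Complex.ofReal_neg]
    apply key
    intro i
    have h1 := (abs_le.mp (hb i)).2
    have h3 : -((1+c)⁻¹ * c) ≤ -((1+c)⁻¹ * ev i) := by
      apply neg_le_neg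
      exact mul_le_mul_of_nonneg_left h1 (by positivity)
    nlinarith

lemma herm_zero (hn : 0 < n) (h₀ R : Matrix (Fin n × Fin n) (Fin n × Fin n) ℂ)
    (hext : IsExtremalMTS n h₀)
    (hRherm : Rᴴ = R) (hRidem : R * R = R)
    (hRrange : LinearMap.range (Matrix.toLin' R) = LinearMap.range (Matrix.toLin' h₀))
    (k : Matrix (Fin n × Fin n) (Fin n × Fin n) ℂ)
    (hkH : kᴴ = k) (hk : R * k * R = k)
    (hP : Pexp n k = 0) (hQ : Qexp n k = 0) : k = 0 := by
  have hPSD := hext.1.1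
  have hh : h₀ᴴ = h₀ := hPSD.isHermitian
  obtain ⟨C, hC⟩ := exists_factor hRrange
  have hR' : Cᴴ * h₀ = R := by
    have := congrArg conjTranspose hC
    rwa [conjTranspose_mul, hh, hRherm] at this
  obtain ⟨D, hDH, hkfact⟩ : ∃ D : Matrix (Fin n × Fin n) (Fin n × Fin n) ℂ,
      Dᴴ = D ∧ k = h₀ * D * h₀ := by
    refine ⟨C * k * Cᴴ, ?_, ?_⟩
    · rw [conjTranspose_mul, conjTranspose_mul, conjTranspose_conjTranspose, hkH, mul_assoc]
    · conv_lhs => rw [← hk]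
      nth_rewrite 1 [← hC]
      nth_rewrite 1 [← hR']
      noncomm_ring
  obtain ⟨s, hsH, hss⟩ : ∃ s : Matrix (Fin n × Fin n) (Fin n × Fin n) ℂ,
      sᴴ = s ∧ s * s = h₀ :=
    by
      open scoped MatrixOrder in
      obtain ⟨X, hX, -, hXX⟩ := CFC.exists_sqrt_of_isSelfAdjoint_of_quasispectrumRestricts
        hPSD.isHermitian (QuasispectrumRestricts.nnreal_of_nonneg hPSD.nonneg)
      exact ⟨X, hX, hXX⟩
  obtain ⟨M, hMH, hsms⟩ : ∃ M : Matrix (Fin n × Fin n) (Fin n × Fin n) ℂ,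
      M.IsHermitian ∧ s * M * s = k := by
    refine ⟨s * D * s, ?_, ?_⟩
    · show _ᴴ = _
      rw [conjTranspose_mul, conjTranspose_mul, hsH, hDH, mul_assoc]
    · have h2 : s * (s * D * s) * s = s * s * D * (s * s) := by noncomm_ring
      rw [h2, hss, ← hkfact]
  obtain ⟨ε, hε, hplus, hminus⟩ := exists_eps M hMH
  have hfac : ∀ c : ℂ, h₀ + c • k = s * ((1 : Matrix _ _ ℂ) + c • M) * s := by
    intro c
    rw [mul_add, add_mul, mul_one, hss, mul_smul_comm, smul_mul_assoc, hsms]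
  have psd_of : ∀ X : Matrix (Fin n × Fin n) (Fin n × Fin n) ℂ, X.PosSemidef →
      (s * X * s).PosSemidef := by
    intro X hX
    have := hX.mul_mul_conjTranspose_same s
    rwa [hsH] at this
  have h1PSD : (h₀ + (ε:ℂ) • k).PosSemidef := by
    rw [hfac]; exact psd_of _ hplus
  have h2PSD : (h₀ + (-(ε:ℂ)) • k).PosSemidef := by
    have heq2 : h₀ + (-(ε:ℂ)) • k = s * ((1 : Matrix _ _ ℂ) - (ε:ℂ) • M) * s := by
      rw [hfac (-(ε:ℂ)), neg_smul, sub_eq_add_neg]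
    rw [heq2]; exact psd_of _ hminus
  have hP0 : Pexp n h₀ = 1 := hext.1.2.1
  have hQ0 : Qexp n h₀ = 1 := hext.1.2.2
  have mts : ∀ c : ℂ, (h₀ + c • k).PosSemidef → IsMTS n (h₀ + c • k) := by
    intro c hpsd
    refine ⟨hpsd, ?_, ?_⟩
    · rw [Pexp_add, Pexp_smul, hP, hP0, smul_zero, add_zero]
    · rw [Qexp_add, Qexp_smul, hQ, hQ0, smul_zero, add_zero]
  have hcomb : h₀ = ((1/2 : ℝ) : ℂ) • (h₀ + (ε:ℂ) • k) +
      (((1 - (1/2 : ℝ)) : ℝ) : ℂ) • (h₀ + (-(ε:ℂ)) • k) := by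
    push_cast
    module
  obtain ⟨heq, -⟩ := hext.2 _ _ (1/2) (by norm_num) (by norm_num)
    (mts _ h1PSD) (mts _ h2PSD) hcomb
  have hz : (ε:ℂ) • k = 0 := by
    have h3 := congrArg (· - h₀) heq
    simpa [add_sub_cancel_left] using h3
  have hεne : (ε:ℂ) ≠ 0 := by
    exact_mod_cast hε.ne'
  exact (smul_eq_zero.mp hz).resolve_left hεne

lemma Pexp_sub (a b : Matrix (Fin n × Fin n) (Fin n × Fin n) ℂ) :
    Pexp n (a - b) = Pexp n a - Pexp n b := by
  ext p q
  simp only [Pexp, of_apply, Matrix.sub_apply]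
  split <;> simp [Finset.sum_sub_distrib, sub_div]

lemma Qexp_sub (a b : Matrix (Fin n × Fin n) (Fin n × Fin n) ℂ) :
    Qexp n (a - b) = Qexp n a - Qexp n b := by
  ext p q
  simp only [Qexp, of_apply, Matrix.sub_apply]
  split <;> simp [Finset.sum_sub_distrib, sub_div]

lemma Pexp_conjTranspose (a : Matrix (Fin n × Fin n) (Fin n × Fin n) ℂ) :
    Pexp n aᴴ = (Pexp n a)ᴴ := by
  ext p q
  simp only [Pexp, of_apply, conjTranspose_apply]
  by_cases h : p.2 = q.2
  · simp only [h, if_pos rfl, if_pos h.symm]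
    simp [star_div₀, star_sum]
  · rw [if_neg h, if_neg (fun hh => h hh.symm), star_zero]

lemma Qexp_conjTranspose (a : Matrix (Fin n × Fin n) (Fin n × Fin n) ℂ) :
    Qexp n aᴴ = (Qexp n a)ᴴ := by
  ext p q
  simp only [Qexp, of_apply, conjTranspose_apply]
  by_cases h : p.1 = q.1
  · simp only [h, if_pos rfl, if_pos h.symm]
    simp [star_div₀, star_sum]
  · rw [if_neg h, if_neg (fun hh => h hh.symm), star_zero]

lemma key_zero (hn : 0 < n) (h₀ R : Matrix (Fin n × Fin n) (Fin n × Fin n) ℂ)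
    (hext : IsExtremalMTS n h₀)
    (hRherm : Rᴴ = R) (hRidem : R * R = R)
    (hRrange : LinearMap.range (Matrix.toLin' R) = LinearMap.range (Matrix.toLin' h₀))
    (k : Matrix (Fin n × Fin n) (Fin n × Fin n) ℂ)
    (hk : R * k * R = k) (hP : Pexp n k = 0) (hQ : Qexp n k = 0) : k = 0 := by
  have hkH : R * kᴴ * R = kᴴ := by
    have h := congrArg conjTranspose hk
    rw [conjTranspose_mul, conjTranspose_mul, hRherm] at h
    rwa [← mul_assoc] at h
  have hPk' : Pexp n kᴴ = 0 := by rw [Pexp_conjTranspose, hP, conjTranspose_zero]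
  have hQk' : Qexp n kᴴ = 0 := by rw [Qexp_conjTranspose, hQ, conjTranspose_zero]
  have h1 : k + kᴴ = 0 := by
    apply herm_zero hn h₀ R hext hRherm hRidem hRrange
    · rw [conjTranspose_add, conjTranspose_conjTranspose, add_comm]
    · rw [mul_add, add_mul, hk, hkH]
    · rw [Pexp_add, hP, hPk', add_zero]
    · rw [Qexp_add, hQ, hQk', add_zero]
  have h2 : Complex.I • (k - kᴴ) = 0 := by
    apply herm_zero hn h₀ R hext hRherm hRidem hRrange
    · rw [conjTranspose_smul, conjTranspose_sub, conjTranspose_conjTranspose, Complex.star_def,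
        Complex.conj_I]
      module
    · rw [mul_smul_comm, smul_mul_assoc, mul_sub, sub_mul, hk, hkH]
    · rw [Pexp_smul, Pexp_sub, hP, hPk', sub_zero, smul_zero]
    · rw [Qexp_smul, Qexp_sub, hQ, hQk', sub_zero, smul_zero]
  have h2' : k - kᴴ = 0 := by
    rcases smul_eq_zero.mp h2 with h | h
    · exact absurd h Complex.I_ne_zero
    · exact h
  have : k = (1/2 : ℂ) • ((k + kᴴ) + (k - kᴴ)) := by module
  rw [this, h1, h2', add_zero, smul_zero]

set_option maxHeartbeats 1000000 in
/-- for an extremal marginal tracial state `h₀` with range projection `R`,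
`B ⊗ B = ℂI + (N ⊗ I + I ⊗ N) + (R(B⊗B)R)ᵒ`, where `ᵒ` is the Hilbert–Schmidt
orthogonal complement. -/
theorem stmt15 (n : ℕ) (hn : 0 < n)
    (h₀ R : Matrix (Fin n × Fin n) (Fin n × Fin n) ℂ)
    (hext : IsExtremalMTS n h₀)
    (hRherm : Rᴴ = R) (hRidem : R * R = R)
    (hRrange : LinearMap.range (Matrix.toLin' R) = LinearMap.range (Matrix.toLin' h₀)) :
    ∀ z : Matrix (Fin n × Fin n) (Fin n × Fin n) ℂ,
      ∃ (c : ℂ) (x y : Matrix (Fin n) (Fin n) ℂ)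
        (w : Matrix (Fin n × Fin n) (Fin n × Fin n) ℂ),
        x.trace = 0 ∧ y.trace = 0 ∧
        (∀ a : Matrix (Fin n × Fin n) (Fin n × Fin n) ℂ,
          ((R * a * R)ᴴ * w).trace / ((n : ℂ)^2) = 0) ∧
        z = c • (1 : Matrix (Fin n × Fin n) (Fin n × Fin n) ℂ) +
          (x ⊗ₖ (1 : Matrix (Fin n) (Fin n) ℂ) + (1 : Matrix (Fin n) (Fin n) ℂ) ⊗ₖ y) + w := by
  intro z
  classical
  have hn' : (n : ℂ) ≠ 0 := Nat.cast_ne_zero.mpr hn.ne'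
  let fR : Matrix (Fin n × Fin n) (Fin n × Fin n) ℂ →ₗ[ℂ]
      Matrix (Fin n × Fin n) (Fin n × Fin n) ℂ :=
    { toFun := fun a => R * a * R
      map_add' := fun a b => by
        show R * (a + b) * R = R * a * R + R * b * R
        rw [mul_add, add_mul]
      map_smul' := fun c a => by simp [mul_smul_comm, smul_mul_assoc] }
  let L : (Matrix (Fin n) (Fin n) ℂ × Matrix (Fin n) (Fin n) ℂ) →ₗ[ℂ]
      Matrix (Fin n × Fin n) (Fin n × Fin n) ℂ :=
    { toFun := fun xy => xy.1 ⊗ₖ (1 : Matrix (Fin n) (Fin n) ℂ) +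
        (1 : Matrix (Fin n) (Fin n) ℂ) ⊗ₖ xy.2
      map_add' := fun a b => by
        simp only [Prod.fst_add, Prod.snd_add, add_kronecker, kronecker_add]
        abel
      map_smul' := fun c a => by
        simp only [Prod.smul_fst, Prod.smul_snd, smul_kronecker, kronecker_smul,
          RingHom.id_apply, smul_add] }
  let e := (matEquiv (ι := Fin n × Fin n))
  let SM := LinearMap.range (e.toLinearMap ∘ₗ L)
  let MM := LinearMap.range (e.toLinearMap ∘ₗ fR)
  have horth : SMᗮ ⊓ MM = ⊥ := by
    rw [Submodule.eq_bot_iff]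
    rintro u ⟨huS, a, rfl⟩
    have hk : R * (R * a * R) * R = R * a * R := by
      have h5 : R * (R * a * R) * R = (R * R) * a * (R * R) := by noncomm_ring
      rw [h5, hRidem]
    have hbase : ∀ b : Matrix (Fin n × Fin n) (Fin n × Fin n) ℂ,
        (∃ xy, L xy = b) → (bᴴ * (R * a * R)).trace = 0 := by
      rintro b ⟨xy, rfl⟩
      have h6 := huS (e (L xy)) ⟨xy, rfl⟩
      rw [← matEquiv_inner]
      exact h6
    have hPz : Pexp n (R * a * R) = 0 := by
      apply Pexp_eq_zero_of
      intro x
      have := hbase (x ⊗ₖ (1 : Matrix (Fin n) (Fin n) ℂ)) ⟨(x, 0), by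
        show x ⊗ₖ _ + _ ⊗ₖ (0 : Matrix (Fin n) (Fin n) ℂ) = _
        rw [kronecker_zero, add_zero]⟩
      exact this
    have hQz : Qexp n (R * a * R) = 0 := by
      apply Qexp_eq_zero_of
      intro y
      have := hbase ((1 : Matrix (Fin n) (Fin n) ℂ) ⊗ₖ y) ⟨(0, y), by
        show (0 : Matrix (Fin n) (Fin n) ℂ) ⊗ₖ _ + _ = _
        rw [zero_kronecker, zero_add]⟩
      exact this
    have hz0 := key_zero hn h₀ R hext hRherm hRidem hRrange (R * a * R) hk hPz hQz
    show (e.toLinearMap ∘ₗ fR) a = 0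
    simp only [LinearMap.comp_apply]
    have : fR a = 0 := hz0
    rw [this, map_zero]
  have htop : SM ⊔ MMᗮ = ⊤ := by
    have h1 : (SM ⊔ MMᗮ)ᗮ = ⊥ := by
      rw [← Submodule.inf_orthogonal, Submodule.orthogonal_orthogonal]
      exact horth
    have h2 := congrArg Submodule.orthogonal h1
    rwa [Submodule.orthogonal_orthogonal, Submodule.bot_orthogonal_eq_top] at h2
  have hz : e z ∈ SM ⊔ MMᗮ := htop ▸ Submodule.mem_top
  obtain ⟨u, hu, v, hv, huv⟩ := Submodule.mem_sup.mp hz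
  obtain ⟨⟨x, y⟩, rfl⟩ := hu
  have hzdecomp : z = (x ⊗ₖ (1 : Matrix (Fin n) (Fin n) ℂ) +
      (1 : Matrix (Fin n) (Fin n) ℂ) ⊗ₖ y) + e.symm v := by
    apply e.injective
    rw [map_add, e.apply_symm_apply, ← huv]
    rfl
  refine ⟨x.trace / n + y.trace / n,
    x + (-(x.trace / n)) • 1, y + (-(y.trace / n)) • 1, e.symm v, ?_, ?_, ?_, ?_⟩
  · rw [trace_add, trace_smul, trace_one]
    simp only [Fintype.card_fin, smul_eq_mul]
    field_simp
    ring
  · rw [trace_add, trace_smul, trace_one]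
    simp only [Fintype.card_fin, smul_eq_mul]
    field_simp
    ring
  · intro a
    rw [Submodule.mem_orthogonal] at hv
    have h7 := hv (e.toLinearMap (fR a)) ⟨a, rfl⟩
    rw [← e.apply_symm_apply v] at h7
    have h8 : ((R * a * R)ᴴ * (e.symm v)).trace = 0 := by
      rw [← matEquiv_inner]
      exact h7
    rw [h8, zero_div]
  · rw [hzdecomp]
    rw [add_kronecker, kronecker_add, smul_kronecker, kronecker_smul, ← one_kronecker_one]
    push_cast
    rw [add_smul, neg_smul, neg_smul]
    abel
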